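/- Let X be a nonnegative real random variable with mean μ > 0 satisfying the tail bound P(X > μ + t) < exp(-t²/2) for all t ≥ 0, and suppose μ ≤ 0.05. Then P(X > 0) > μ / (5·log(1/μ)). -/

import Mathlib

open MeasureTheory Real
open Set

/-- sub-Gaussian positivity bound for small mean. -/
theorem stmt_2 {Ω : Type*} [MeasurableSpace Ω] (P : Measure Ω) [IsProbabilityMeasure P]
    (X : Ω → ℝ) (μ : ℝ) (hμ : 0 < μ) (hμ' : μ ≤ 0.05)
    (hmeas : Measurable X) (hnn : ∀ᵐ ω ∂P, 0 ≤ X ω)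
    (hint : Integrable X P) (hmean : ∫ ω, X ω ∂P = μ)
    (htail : ∀ t : ℝ, 0 ≤ t → (P {ω | X ω > μ + t}).toReal < Real.exp (-t ^ 2 / 2)) :
    (P {ω | X ω > 0}).toReal > μ / (5 * Real.log (1 / μ)) := by
  set L : ℝ := Real.log (1/μ) with hLdef
  have hL2 : Real.log 2 ≤ L := by
    apply Real.log_le_log (by norm_num)
    rw [le_div_iff₀ hμ]; linarith
  have h69 : (0.6931 : ℝ) < L := lt_of_lt_of_le (by linarith [Real.log_two_gt_d9]) hL2
  have hLpos : 0 < L := by linarith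
  set s : ℝ := Real.sqrt L with hsdef
  have hs : 0 < s := Real.sqrt_pos.mpr hLpos
  have hsq : s^2 = L := Real.sq_sqrt hLpos.le
  set T : ℝ := μ + 2*s with hTdef
  have hT : 0 < T := by positivity
  -- the tail probability function
  set g : ℝ → ℝ := fun t => (P {ω | t < X ω}).toReal with hgdef
  have hanti' : Antitone (fun t : ℝ => P {ω | t < X ω}) :=
    fun t t' htt' => measure_mono (fun ω h => lt_of_le_of_lt htt' h)
  have hg_anti : Antitone g := fun t t' htt' =>
    ENNReal.toReal_le_toReal (measure_ne_top _ _) (measure_ne_top _ _) |>.mpr (hanti' htt')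
  have hg_meas : Measurable g := hanti'.measurable.ennreal_toReal
  have hg_nonneg : ∀ t, 0 ≤ g t := fun t => ENNReal.toReal_nonneg
  -- layer cake
  have hlayer : μ = ∫ t in Ioi (0:ℝ), g t := by
    rw [← hmean, hint.integral_eq_integral_meas_lt hnn]
    rfl
  -- integrability of g on Ioi 0
  have hg_int : IntegrableOn g (Ioi (0:ℝ)) := by
    refine ⟨hg_meas.aestronglyMeasurable, ?_⟩
    rw [hasFiniteIntegral_iff_ofReal (Filter.Eventually.of_forall hg_nonneg)]
    have h : ∀ t : ℝ, ENNReal.ofReal (g t) = P {ω | t < X ω} := fun t =>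
      ENNReal.ofReal_toReal (measure_ne_top _ _)
    simp_rw [h]
    rw [← lintegral_eq_lintegral_meas_lt P hnn hmeas.aemeasurable]
    exact hint.lintegral_lt_top
  -- Gaussian: integrable
  have hgauss_int : Integrable (fun t : ℝ => Real.exp (-(t - μ)^2 / 2)) := by
    have h := (integrable_exp_neg_mul_sq (by norm_num : (0:ℝ) < 1/2)).comp_sub_right μ
    refine h.congr (Filter.Eventually.of_forall fun t => ?_)
    simp only [Function.comp]
    ring_nf
  have hxgauss_int : Integrable (fun t : ℝ => (t - μ) * Real.exp (-(t - μ)^2 / 2)) := by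
    have h := ((integrable_mul_exp_neg_mul_sq (by norm_num : (0:ℝ) < 1/2)).comp_sub_right μ)
    refine h.congr (Filter.Eventually.of_forall fun t => ?_)
    simp only [Function.comp]
    ring_nf
  -- split the integral
  have hsplit : ∫ t in Ioi (0:ℝ), g t
      = (∫ t in Ioc 0 T, g t) + ∫ t in Ioi T, g t := by
    rw [← setIntegral_union (Ioc_disjoint_Ioi le_rfl) measurableSet_Ioi
      (hg_int.mono_set Ioc_subset_Ioi_self) (hg_int.mono_set (Ioi_subset_Ioi hT.le)),
      Ioc_union_Ioi_eq_Ioi hT.le]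
  -- head bound
  have hhead : ∫ t in Ioc 0 T, g t ≤ T * g 0 := by
    calc ∫ t in Ioc 0 T, g t ≤ ∫ _ in Ioc 0 T, g 0 :=
        setIntegral_mono_on (hg_int.mono_set Ioc_subset_Ioi_self)
          (integrableOn_const measure_Ioc_lt_top.ne) measurableSet_Ioc
          (fun t ht => hg_anti ht.1.le)
      _ = T * g 0 := by
        rw [setIntegral_const, Real.volume_real_Ioc_of_le (by linarith),
          smul_eq_mul]
        ring
  -- tail bound, step 1: compare with gaussian
  have htail1 : ∫ t in Ioi T, g t ≤ ∫ t in Ioi T, Real.exp (-(t - μ)^2 / 2) := by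
    refine setIntegral_mono_on (hg_int.mono_set (Ioi_subset_Ioi hT.le))
      hgauss_int.integrableOn measurableSet_Ioi (fun t ht => ?_)
    have h1 : 0 ≤ t - μ := by
      have h2 : T < t := ht
      simp only [hTdef] at h2
      nlinarith
    have h3 := (htail (t - μ) h1).le
    simpa using h3
  -- tail bound, step 2: gaussian tail integral via FTC
  have hFTC : ∫ t in Ioi T, (t - μ) * Real.exp (-(t - μ)^2 / 2)
      = Real.exp (-(2*s)^2 / 2) := by
    have hderiv : ∀ t ∈ Ici T, HasDerivAt (fun t => -Real.exp (-(t - μ)^2 / 2))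
        ((t - μ) * Real.exp (-(t - μ)^2 / 2)) t := by
      intro t _
      have h1 : HasDerivAt (fun t : ℝ => -(t - μ)^2 / 2) (-(t - μ)) t := by
        have h0 := (((hasDerivAt_id t).sub_const μ).pow 2).neg.div_const 2
        refine h0.congr_deriv ?_
        simp only [id_eq]
        ring
      have h2 := (h1.exp).neg
      refine h2.congr_deriv ?_
      ring
    have hlim : Filter.Tendsto (fun t => -Real.exp (-(t - μ)^2 / 2)) Filter.atTop (nhds 0) := by
      rw [← neg_zero]
      refine Filter.Tendsto.neg ?_
      refine Real.tendsto_exp_atBot.comp ?_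
      apply Filter.Tendsto.atBot_div_const (by norm_num : (0:ℝ) < 2)
      apply Filter.tendsto_neg_atBot_iff.mpr
      exact (Filter.tendsto_pow_atTop (by norm_num)).comp
        (Filter.tendsto_atTop_add_const_right _ (-μ) Filter.tendsto_id)
    have h := integral_Ioi_of_hasDerivAt_of_tendsto' hderiv hxgauss_int.integrableOn hlim
    rw [h]
    simp only [hTdef]
    ring_nf
  have hexp : Real.exp (-(2*s)^2 / 2) = μ^2 := by
    have h1 : -(2*s)^2/2 = -(L + L) := by rw [← hsq]; ring
    rw [h1, Real.exp_neg, Real.exp_add, hLdef, Real.exp_log (by positivity)]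
    field_simp
  -- tail bound, step 3
  have htail2 : ∫ t in Ioi T, Real.exp (-(t - μ)^2 / 2) ≤ μ^2 / (2*s) := by
    have hmono : ∫ t in Ioi T, Real.exp (-(t - μ)^2 / 2)
        ≤ ∫ t in Ioi T, (1/(2*s)) * ((t - μ) * Real.exp (-(t - μ)^2 / 2)) := by
      refine setIntegral_mono_on hgauss_int.integrableOn
        (hxgauss_int.const_mul _).integrableOn measurableSet_Ioi (fun t ht => ?_)
      have h2 : T < t := ht
      have h3 : 2*s ≤ t - μ := by simp only [hTdef] at h2; linarith
      have hepos : 0 < Real.exp (-(t - μ)^2 / 2) := Real.exp_pos _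
      have h2s : (0:ℝ) < 2*s := by linarith
      have hc : 1 ≤ (t - μ) * (1/(2*s)) := by
        rw [mul_one_div, le_div_iff₀ h2s]
        linarith
      have heq : 1/(2*s) * ((t - μ) * Real.exp (-(t - μ)^2 / 2))
          = ((t - μ) * (1/(2*s))) * Real.exp (-(t - μ)^2 / 2) := by ring
      rw [heq]
      exact le_mul_of_one_le_left hepos.le hc
    rw [integral_const_mul, hFTC, hexp] at hmono
    calc ∫ t in Ioi T, Real.exp (-(t - μ)^2 / 2) ≤ 1/(2*s) * μ^2 := hmono
      _ = μ^2 / (2*s) := by ring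
  -- combine
  have hcomb : μ ≤ T * g 0 + μ^2/(2*s) := by
    have hB : ∫ t in Ioi T, g t ≤ μ^2/(2*s) := le_trans htail1 htail2
    calc μ = (∫ t in Ioc 0 T, g t) + ∫ t in Ioi T, g t := hlayer.trans hsplit
      _ ≤ T * g 0 + μ^2/(2*s) := add_le_add hhead hB
  have hp : (P {ω | X ω > 0}).toReal = g 0 := rfl
  rw [hp]
  have hkey : μ / (5 * L) < (μ - μ^2/(2*s)) / (μ + 2*s) := by
    have hs8 : (0.83 : ℝ) ≤ s := by nlinarith
    have h2s : (0:ℝ) < 2*s := by linarith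
    have poly : μ * (μ + 2*s) * (2*s) < (μ*(2*s) - μ^2) * (5*L) := by
      nlinarith [mul_pos hμ hs, mul_le_mul_of_nonneg_left hs8 (mul_pos hμ hs).le,
        mul_pos (mul_pos hμ hs) hs]
    have hrw : μ - μ^2/(2*s) = (μ*(2*s) - μ^2)/(2*s) := by field_simp
    rw [div_lt_div_iff₀ (by linarith : (0:ℝ) < 5*L) (by linarith : (0:ℝ) < μ + 2*s),
      hrw, div_mul_eq_mul_div, lt_div_iff₀ h2s]
    linarith [poly]
  have hge : (μ - μ^2/(2*s)) / (μ + 2*s) ≤ g 0 := by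
    rw [div_le_iff₀ (show (0:ℝ) < μ + 2*s by positivity)]
    nlinarith [hg_nonneg 0, hcomb, hTdef]
  linarith
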